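/- (Convergence to stationarity, expected squared gradient norm.) Let (Ω, 𝒜, P) be a probability space with a filtration (ℱ_t)_{t∈ℕ}. Let L : ℝ^d → ℝ be continuously differentiable, bounded below, with β-Lipschitz gradient for some β > 0. Let (φ_t) be random vectors in ℝ^d with φ_t ℱ_t-measurable, and (g_t) random vectors with g_t ℱ_{t+1}-measurable, satisfying the recursion φ_{t+1} = φ_t − η_t g_t for deterministic step sizes η_t with 0 < η_t ≤ 1/β, η_t → 0, Σ_t η_t = ∞, and Σ_t η_t² < ∞. Assume, for all t: E[g_t | ℱ_t] = ∇L(φ_t) almost surely; E[‖g_t − ∇L(φ_t)‖² | ℱ_t] ≤ v almost surely for a constant v ≥ 0; ‖g_t‖ ≤ G almost surely for a constant G ≥ 0; and there is a constant C_∇ ≥ 0 with ‖∇L(φ_t)‖ ≤ C_∇ almost surely for all t. Then lim_{t→∞} E[‖∇L(φ_t)‖²] = 0. -/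

import Mathlib

open MeasureTheory Filter
open scoped RealInnerProductSpace

section aux

lemma det_tendsto_zero (a η : ℕ → ℝ) (ha : ∀ t, 0 ≤ a t) (hη : ∀ t, 0 < η t)
    (K : ℝ) (hK : 0 < K) (hstep : ∀ t, |a (t + 1) - a t| ≤ K * η t)
    (hsum : Summable fun t => η t * a t)
    (hdiv : Tendsto (fun n => ∑ t ∈ Finset.range n, η t) atTop atTop) :
    Tendsto a atTop (nhds 0) := by
  rw [Metric.tendsto_atTop]
  intro ε hε
  by_contra hcon
  push_neg at hcon
  -- decrease claim
  have hdec : ∀ N s, N ≤ s → a N - K * ∑ t ∈ Finset.Ico N s, η t ≤ a s := by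
    intro N s hNs
    induction s, hNs using Nat.le_induction with
    | base => simp
    | succ s hNs ih =>
      rw [Finset.sum_Ico_succ_top hNs]
      have h1 : a s - K * η s ≤ a (s + 1) := by
        have := hstep s
        have := abs_le.mp this
        linarith [this.1]
      nlinarith [ih]
  set f : ℕ → ℝ := fun t => η t * a t with hf
  have hf0 : ∀ t, 0 ≤ f t := fun t => mul_nonneg (hη t).le (ha t)
  -- tails of the summable series are small
  set δ : ℝ := ε ^ 2 / (4 * K) with hδ
  have hδ0 : 0 < δ := by positivity
  obtain ⟨N₀, hN₀⟩ : ∃ N₀, ∀ N M, N₀ ≤ N → ∑ t ∈ Finset.Ico N M, f t < δ := by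
    have htend : Tendsto (fun n => ∑ t ∈ Finset.range n, f t) atTop (nhds (∑' t, f t)) :=
      hsum.hasSum.tendsto_sum_nat
    have : ∀ᶠ n in atTop, (∑' t, f t) - δ < ∑ t ∈ Finset.range n, f t := by
      have := htend.eventually (eventually_gt_nhds (by linarith : (∑' t, f t) - δ < ∑' t, f t))
      exact this
    obtain ⟨N₀, hN₀⟩ := this.exists_forall_of_atTop
    refine ⟨N₀, fun N M hN => ?_⟩
    have h1 : (∑' t, f t) - δ < ∑ t ∈ Finset.range N, f t := hN₀ N hN
    have h2 : ∑ t ∈ Finset.range N, f t + ∑ t ∈ Finset.Ico N M, f t ≤ ∑' t, f t := by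
      rcases le_or_gt M N with hMN | hMN
      · have : ∑ t ∈ Finset.Ico N M, f t = 0 := by
          rw [Finset.Ico_eq_empty (by omega)]; simp
        rw [this, add_zero]
        exact Summable.sum_le_tsum _ (fun t _ => hf0 t) hsum
      · rw [Finset.sum_range_add_sum_Ico _ hMN.le]
        exact Summable.sum_le_tsum _ (fun t _ => hf0 t) hsum
    linarith
  -- pick N ≥ N₀ with a N ≥ ε
  obtain ⟨N, hNN₀, haN⟩ := hcon N₀
  rw [Real.dist_eq, sub_zero, abs_of_nonneg (ha N)] at haN
  -- find minimal M with ∑_{[N,M)} η ≥ ε/(2K)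
  set c : ℝ := ε / (2 * K) with hc
  have hc0 : 0 < c := by positivity
  have hex : ∃ M, c ≤ ∑ t ∈ Finset.Ico N M, η t := by
    obtain ⟨M, hM⟩ := (tendsto_atTop.mp hdiv (c + ∑ t ∈ Finset.range N, η t)).exists_forall_of_atTop
    refine ⟨max M N, ?_⟩
    have h1 := hM (max M N) (le_max_left _ _)
    have h2 : ∑ t ∈ Finset.range N, η t + ∑ t ∈ Finset.Ico N (max M N), η t
        = ∑ t ∈ Finset.range (max M N), η t := Finset.sum_range_add_sum_Ico _ (le_max_right _ _)
    linarith
  set M := Nat.find hex with hM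
  have hMspec : c ≤ ∑ t ∈ Finset.Ico N M, η t := Nat.find_spec hex
  have hMmin : ∀ s, s < M → ∑ t ∈ Finset.Ico N s, η t < c := fun s hs => by
    have := Nat.find_min hex hs
    linarith [lt_of_not_ge this]
  -- on [N, M), a ≥ ε/2
  have hbig : ∀ s, N ≤ s → s < M → ε / 2 ≤ a s := by
    intro s hNs hsM
    have h1 := hdec N s hNs
    have h2 := hMmin s hsM
    have : a N - K * c ≤ a s := by nlinarith [Finset.sum_nonneg (fun t (_ : t ∈ Finset.Ico N s) => (hη t).le)]
    have hKc : K * c = ε / 2 := by rw [hc]; field_simp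
    nlinarith
  -- window sum is big
  have hwin : δ ≤ ∑ t ∈ Finset.Ico N M, f t := by
    have h1 : ∑ t ∈ Finset.Ico N M, (ε / 2) * η t ≤ ∑ t ∈ Finset.Ico N M, f t := by
      refine Finset.sum_le_sum fun t ht => ?_
      obtain ⟨h1, h2⟩ := Finset.mem_Ico.mp ht
      have := hbig t h1 h2
      have := hη t
      simp only [hf]
      nlinarith
    have h2 : (ε / 2) * c ≤ (ε / 2) * ∑ t ∈ Finset.Ico N M, η t :=
      mul_le_mul_of_nonneg_left hMspec (by linarith)
    rw [← Finset.mul_sum] at h1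
    have : (ε / 2) * c = δ := by field_simp [hc, hδ]; ring
    linarith
  exact absurd (hN₀ N M hNN₀) (not_lt.mpr hwin)


lemma descent_lemma {d : ℕ} (L : EuclideanSpace ℝ (Fin d) → ℝ) (hLdiff : ContDiff ℝ 1 L)
    (β : ℝ) (hβ : 0 ≤ β)
    (hLip : ∀ x y, ‖gradient L x - gradient L y‖ ≤ β * ‖x - y‖)
    (x y : EuclideanSpace ℝ (Fin d)) :
    L y ≤ L x + ⟪gradient L x, y - x⟫ + β * ‖y - x‖ ^ 2 := by
  set w := gradient L x with hw
  set h : EuclideanSpace ℝ (Fin d) → ℝ := fun z => L z - (InnerProductSpace.toDual ℝ _ w) z with hh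
  have hdiff : ∀ z, HasFDerivAt h (fderiv ℝ L z - InnerProductSpace.toDual ℝ _ w) z := by
    intro z
    exact ((hLdiff.differentiable one_ne_zero z).hasFDerivAt).sub
      ((InnerProductSpace.toDual ℝ _ w : EuclideanSpace ℝ (Fin d) →L[ℝ] ℝ).hasFDerivAt)
  have hnorm : ∀ z ∈ segment ℝ x y,
      ‖fderiv ℝ L z - InnerProductSpace.toDual ℝ _ w‖ ≤ β * ‖y - x‖ := by
    intro z hz
    have h1 : fderiv ℝ L z = InnerProductSpace.toDual ℝ _ (gradient L z) :=
      ((InnerProductSpace.toDual ℝ _).apply_symm_apply (fderiv ℝ L z)).symm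
    have h2 : ‖fderiv ℝ L z - InnerProductSpace.toDual ℝ _ w‖ = ‖gradient L z - w‖ := by
      rw [h1, ← map_sub, LinearIsometryEquiv.norm_map]
    rw [h2]
    obtain ⟨a, b, ha, hb, hab, rfl⟩ := hz
    have hzx : (a • x + b • y) - x = b • (y - x) := by
      have : a = 1 - b := by linarith
      rw [this]; module
    calc ‖gradient L (a • x + b • y) - w‖ ≤ β * ‖(a • x + b • y) - x‖ := hLip _ _
      _ = β * (b * ‖y - x‖) := by rw [hzx, norm_smul, Real.norm_eq_abs, abs_of_nonneg hb]
      _ ≤ β * ‖y - x‖ := by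
          have hb1 : b ≤ 1 := by linarith
          have h3 : b * ‖y - x‖ ≤ ‖y - x‖ := by nlinarith [norm_nonneg (y - x)]
          exact mul_le_mul_of_nonneg_left h3 hβ
  have hmvt := (convex_segment x y).norm_image_sub_le_of_norm_hasFDerivWithin_le
    (fun z _ => (hdiff z).hasFDerivWithinAt) hnorm (left_mem_segment ℝ x y) (right_mem_segment ℝ x y)
  have hhxy : h y - h x = L y - L x - ⟪w, y - x⟫ := by
    simp only [hh, InnerProductSpace.toDual_apply_apply, inner_sub_right]
    ring
  rw [Real.norm_eq_abs] at hmvt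
  have h4 := (le_abs_self (h y - h x)).trans hmvt
  rw [hhxy] at h4
  nlinarith [sq_nonneg ‖y - x‖, norm_nonneg (y - x)]


lemma coord_abs_le {d : ℕ} (x : EuclideanSpace ℝ (Fin d)) (i : Fin d) : |x i| ≤ ‖x‖ := by
  rw [EuclideanSpace.norm_eq]
  have h : x i ^ 2 ≤ ∑ j, x j ^ 2 :=
    Finset.single_le_sum (f := fun j => x j ^ 2) (fun j _ => sq_nonneg _) (Finset.mem_univ i)
  calc |x i| = Real.sqrt (x i ^ 2) := (Real.sqrt_sq_eq_abs _).symm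
    _ ≤ Real.sqrt (∑ j, x j ^ 2) := Real.sqrt_le_sqrt h
    _ = _ := by simp [Real.norm_eq_abs, sq_abs]

lemma inner_eq_sum {d : ℕ} (x y : EuclideanSpace ℝ (Fin d)) : ⟪x, y⟫ = ∑ i, x i * y i := by
  simp [PiLp.inner_apply, RCLike.inner_apply, conj_trivial, mul_comm]

end aux

set_option maxHeartbeats 1000000 in
/-- **Convergence to stationarity in expected squared gradient norm.** For the
stochastic gradient recursion `φ (t+1) = φ t - η t • g t` with `L` continuously
differentiable, bounded below, with `β`-Lipschitz gradient, diminishing step sizes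
`0 < η t ≤ 1/β`, `η t → 0`, `∑ η t = ∞`, `∑ (η t)² < ∞`, conditionally unbiased
estimators `E[g t | ℱ t] = ∇L(φ t)` with conditional variance bound `v`, a.s. norm bound
`G`, and a.s. gradient bound `‖∇L(φ t)‖ ≤ Cgrad` (compact containment), we have
`lim_t E[‖∇L(φ t)‖²] = 0`. -/
theorem convergence_to_stationarity_in_expectation {d : ℕ}
    {Ω : Type*} {𝒜 : MeasurableSpace Ω} (μ : Measure Ω) [IsProbabilityMeasure μ]
    (ℱ : Filtration ℕ 𝒜)
    (L : EuclideanSpace ℝ (Fin d) → ℝ) (hLdiff : ContDiff ℝ 1 L)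
    (hLbdd : BddBelow (Set.range L))
    (β : ℝ) (hβ : 0 < β)
    (hLip : ∀ x y, ‖gradient L x - gradient L y‖ ≤ β * ‖x - y‖)
    (φ g : ℕ → Ω → EuclideanSpace ℝ (Fin d))
    (hφmeas : ∀ t, Measurable[ℱ t] (φ t))
    (hgmeas : ∀ t, Measurable[ℱ (t + 1)] (g t))
    (η : ℕ → ℝ) (hη0 : ∀ t, 0 < η t) (hηβ : ∀ t, η t ≤ 1 / β)
    (hηlim : Tendsto η atTop (nhds 0))
    (hηdiv : Tendsto (fun n => ∑ t ∈ Finset.range n, η t) atTop atTop)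
    (hη2 : Summable fun t => (η t) ^ 2)
    (hrec : ∀ t ω, φ (t + 1) ω = φ t ω - η t • g t ω)
    (v : ℝ) (hv : 0 ≤ v)
    (hunb : ∀ t, μ[g t | ℱ t] =ᵐ[μ] fun ω => gradient L (φ t ω))
    (hvar : ∀ t, ∀ᵐ ω ∂μ,
      (μ[fun ω' => ‖g t ω' - gradient L (φ t ω')‖ ^ 2 | ℱ t]) ω ≤ v)
    (G : ℝ) (hG : 0 ≤ G) (hGbd : ∀ t, ∀ᵐ ω ∂μ, ‖g t ω‖ ≤ G)
    (Cgrad : ℝ) (hCgrad : 0 ≤ Cgrad)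
    (hgradbd : ∀ t, ∀ᵐ ω ∂μ, ‖gradient L (φ t ω)‖ ≤ Cgrad) :
    Tendsto (fun t => ∫ ω, ‖gradient L (φ t ω)‖ ^ 2 ∂μ) atTop (nhds 0) := by
  classical
  set u : ℕ → Ω → EuclideanSpace ℝ (Fin d) := fun t ω => gradient L (φ t ω) with hu
  -- continuity / measurability
  have hgc : Continuous (gradient L) := by
    have h1 : Continuous (fderiv ℝ L) := hLdiff.continuous_fderiv one_ne_zero
    exact ((InnerProductSpace.toDual ℝ (EuclideanSpace ℝ (Fin d))).symm.continuous).comp h1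
  have hφm : ∀ t, Measurable (φ t) := fun t => (hφmeas t).mono (ℱ.le t) le_rfl
  have hgmm : ∀ t, Measurable (g t) := fun t => (hgmeas t).mono (ℱ.le (t + 1)) le_rfl
  have hum : ∀ t, Measurable (u t) := fun t => hgc.measurable.comp (hφm t)
  have humF : ∀ t, Measurable[ℱ t] (u t) := fun t => hgc.measurable.comp (hφmeas t)
  have humi : ∀ t (i : Fin d), Measurable fun ω => u t ω i := fun t i =>
    ((EuclideanSpace.proj (𝕜 := ℝ) i).continuous.measurable).comp (hum t)
  have hgmi : ∀ t (i : Fin d), Measurable fun ω => g t ω i := fun t i =>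
    ((EuclideanSpace.proj (𝕜 := ℝ) i).continuous.measurable).comp (hgmm t)
  -- integrability
  have hgint : ∀ t, Integrable (g t) μ := fun t =>
    (integrable_const G).mono' (hgmm t).aestronglyMeasurable (hGbd t)
  have huint : ∀ t, Integrable (u t) μ := fun t =>
    (integrable_const Cgrad).mono' (hum t).aestronglyMeasurable (hgradbd t)
  have husq_int : ∀ t, Integrable (fun ω => ‖u t ω‖ ^ 2) μ := by
    intro t
    refine (integrable_const (Cgrad ^ 2)).mono'
      ((hum t).norm.pow_const 2).aestronglyMeasurable ?_
    filter_upwards [hgradbd t] with ω hω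
    rw [Real.norm_eq_abs, abs_of_nonneg (by positivity)]
    exact pow_le_pow_left₀ (norm_nonneg _) hω 2
  have hui_gi_int : ∀ t (i : Fin d),
      Integrable ((fun ω => u t ω i) * fun ω => g t ω i) μ := by
    intro t i
    refine (integrable_const (Cgrad * G)).mono'
      (((humi t i).mul (hgmi t i)).aestronglyMeasurable) ?_
    filter_upwards [hgradbd t, hGbd t] with ω h1 h2
    rw [Pi.mul_apply, Real.norm_eq_abs, abs_mul]
    exact mul_le_mul ((coord_abs_le _ i).trans h1) ((coord_abs_le _ i).trans h2)
      (abs_nonneg _) hCgrad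
  have hgi_int : ∀ t (i : Fin d), Integrable (fun ω => g t ω i) μ := by
    intro t i
    refine (integrable_const G).mono' (hgmi t i).aestronglyMeasurable ?_
    filter_upwards [hGbd t] with ω hω
    exact (coord_abs_le _ i).trans hω
  have hui_sq_int : ∀ t (i : Fin d), Integrable (fun ω => u t ω i * u t ω i) μ := by
    intro t i
    refine (integrable_const (Cgrad * Cgrad)).mono'
      ((humi t i).mul (humi t i)).aestronglyMeasurable ?_
    filter_upwards [hgradbd t] with ω hω
    rw [Real.norm_eq_abs, abs_mul]
    exact mul_le_mul ((coord_abs_le _ i).trans hω) ((coord_abs_le _ i).trans hω)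
      (abs_nonneg _) hCgrad
  have hui_coord_int : ∀ t (i : Fin d), Integrable (fun ω => u t ω i) μ := by
    intro t i
    refine (integrable_const Cgrad).mono' (humi t i).aestronglyMeasurable ?_
    filter_upwards [hgradbd t] with ω hω
    exact (coord_abs_le _ i).trans hω
  have hinner_int : ∀ t, Integrable (fun ω => ⟪u t ω, g t ω⟫) μ := by
    intro t
    refine (integrable_const (Cgrad * G)).mono'
      ((hum t).inner (hgmm t)).aestronglyMeasurable ?_
    filter_upwards [hgradbd t, hGbd t] with ω h1 h2
    rw [Real.norm_eq_abs]
    exact (abs_real_inner_le_norm _ _).trans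
      (mul_le_mul h1 h2 (norm_nonneg _) hCgrad)
  -- conditional expectation coordinatewise
  have hcoord : ∀ t (i : Fin d),
      μ[fun ω => g t ω i | ℱ t] =ᵐ[μ] fun ω => u t ω i := by
    intro t i
    refine (ae_eq_condExp_of_forall_setIntegral_eq (ℱ.le t) (hgi_int t i)
      (fun s _ _ => (hui_coord_int t i).integrableOn) ?_ ?_).symm
    · intro s hs _
      have h1 : ∫ ω in s, g t ω ∂μ = ∫ ω in s, u t ω ∂μ := by
        rw [← setIntegral_condExp (ℱ.le t) (hgint t) hs]
        exact setIntegral_congr_ae ((ℱ.le t) s hs)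
          ((hunb t).mono fun ω hω _ => hω)
      have h2 := (EuclideanSpace.proj i : EuclideanSpace ℝ (Fin d) →L[ℝ] ℝ).integral_comp_comm
        ((hgint t).restrict (s := s))
      have h3 := (EuclideanSpace.proj i : EuclideanSpace ℝ (Fin d) →L[ℝ] ℝ).integral_comp_comm
        ((huint t).restrict (s := s))
      calc (∫ ω in s, u t ω i ∂μ)
          = (EuclideanSpace.proj (𝕜 := ℝ) i) (∫ ω in s, u t ω ∂μ) := h3
        _ = (EuclideanSpace.proj (𝕜 := ℝ) i) (∫ ω in s, g t ω ∂μ) := by rw [h1]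
        _ = ∫ ω in s, g t ω i ∂μ := h2.symm
    · exact (((EuclideanSpace.proj i).continuous.measurable.comp
        (humF t)).stronglyMeasurable).aestronglyMeasurable
  -- pull-out property
  have hmul : ∀ t (i : Fin d),
      μ[(fun ω => u t ω i) * (fun ω => g t ω i) | ℱ t]
        =ᵐ[μ] fun ω => u t ω i * u t ω i := by
    intro t i
    have hsm : StronglyMeasurable[ℱ t] fun ω => u t ω i :=
      (((EuclideanSpace.proj (𝕜 := ℝ) i).continuous.measurable).comp
        (humF t)).stronglyMeasurable
    have h1 := condExp_mul_of_stronglyMeasurable_left (μ := μ) hsm (hui_gi_int t i) (hgi_int t i)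
    refine h1.trans ?_
    filter_upwards [hcoord t i] with ω hω
    simp only [Pi.mul_apply, hω]
  -- key set-integral identity
  have hkey : ∀ (t : ℕ) (A : Set Ω), MeasurableSet[ℱ 0] A →
      ∫ ω in A, ⟪u t ω, g t ω⟫ ∂μ = ∫ ω in A, ‖u t ω‖ ^ 2 ∂μ := by
    intro t A hA
    have hAt : MeasurableSet[ℱ t] A := ℱ.mono (Nat.zero_le t) _ hA
    have hA0 : MeasurableSet A := (ℱ.le t) _ hAt
    calc ∫ ω in A, ⟪u t ω, g t ω⟫ ∂μ
        = ∫ ω in A, ∑ i, u t ω i * g t ω i ∂μ := by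
          refine integral_congr_ae (Eventually.of_forall fun ω => ?_)
          exact inner_eq_sum _ _
      _ = ∑ i, ∫ ω in A, u t ω i * g t ω i ∂μ :=
          integral_finset_sum _ (fun i _ => ((hui_gi_int t i).restrict))
      _ = ∑ i, ∫ ω in A, u t ω i * u t ω i ∂μ := by
          refine Finset.sum_congr rfl fun i _ => ?_
          rw [show (∫ ω in A, u t ω i * g t ω i ∂μ)
              = ∫ ω in A, ((fun ω => u t ω i) * fun ω => g t ω i) ω ∂μ from rfl,
            ← setIntegral_condExp (ℱ.le t) (hui_gi_int t i) hAt]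
          exact setIntegral_congr_ae hA0 ((hmul t i).mono fun ω hω _ => hω)
      _ = ∫ ω in A, ∑ i, u t ω i * u t ω i ∂μ :=
          (integral_finset_sum _ (fun i _ => ((hui_sq_int t i).restrict))).symm
      _ = ∫ ω in A, ‖u t ω‖ ^ 2 ∂μ := by
          refine integral_congr_ae (Eventually.of_forall fun ω => ?_)
          have h5 := inner_eq_sum (u t ω) (u t ω)
          rw [real_inner_self_eq_norm_sq] at h5
          simpa using h5.symm
  -- constants
  set S : ℝ := ∑' t, (η t) ^ 2 with hS
  have hSnn : 0 ≤ S := tsum_nonneg fun t => sq_nonneg _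
  set m : ℝ := sInf (Set.range L) with hmdef
  have hmle : ∀ z, m ≤ L z := fun z => csInf_le hLbdd ⟨z, rfl⟩
  have hae : ∀ᵐ ω ∂μ, (∀ t, ‖g t ω‖ ≤ G) ∧ ∀ t, ‖u t ω‖ ≤ Cgrad :=
    (ae_all_iff.mpr hGbd).and (ae_all_iff.mpr hgradbd)
  -- pathwise descent bound
  have hpath : ∀ᵐ ω ∂μ, ∀ n,
      ∑ t ∈ Finset.range n, η t * ⟪u t ω, g t ω⟫ ≤ L (φ 0 ω) - m + β * (G ^ 2 * S) := by
    filter_upwards [hae] with ω hω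
    obtain ⟨hgω, huω⟩ := hω
    have key : ∀ n, L (φ n ω) + ∑ t ∈ Finset.range n, η t * ⟪u t ω, g t ω⟫
        ≤ L (φ 0 ω) + β * ∑ t ∈ Finset.range n, η t ^ 2 * G ^ 2 := by
      intro n
      induction n with
      | zero => simp
      | succ n ih =>
        have hd := descent_lemma L hLdiff β hβ.le hLip (φ n ω) (φ (n + 1) ω)
        have hφd : φ (n + 1) ω - φ n ω = -(η n • g n ω) := by rw [hrec n ω]; abel
        rw [hφd] at hd
        have h1 : ⟪u n ω, -(η n • g n ω)⟫ = -(η n * ⟪u n ω, g n ω⟫) := by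
          rw [inner_neg_right, real_inner_smul_right]
        have h2 : ‖-(η n • g n ω)‖ ^ 2 = η n ^ 2 * ‖g n ω‖ ^ 2 := by
          rw [norm_neg, norm_smul, mul_pow, Real.norm_eq_abs, sq_abs]
        rw [h1, h2] at hd
        have h3 : ‖g n ω‖ ^ 2 ≤ G ^ 2 := by
          have := hgω n; nlinarith [norm_nonneg (g n ω)]
        have h4 : β * (η n ^ 2 * ‖g n ω‖ ^ 2) ≤ β * (η n ^ 2 * G ^ 2) := by
          refine mul_le_mul_of_nonneg_left ?_ hβ.le
          exact mul_le_mul_of_nonneg_left h3 (sq_nonneg _)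
        rw [Finset.sum_range_succ, Finset.sum_range_succ, mul_add]
        linarith [hd, ih, h4]
    intro n
    have h5 : ∑ t ∈ Finset.range n, η t ^ 2 * G ^ 2 ≤ S * G ^ 2 := by
      rw [← Finset.sum_mul]
      exact mul_le_mul_of_nonneg_right
        (Summable.sum_le_tsum _ (fun t _ => sq_nonneg _) hη2) (sq_nonneg G)
    have h8 : β * ∑ t ∈ Finset.range n, η t ^ 2 * G ^ 2 ≤ β * (G ^ 2 * S) := by
      have := mul_le_mul_of_nonneg_left h5 hβ.le
      calc β * ∑ t ∈ Finset.range n, η t ^ 2 * G ^ 2 ≤ β * (S * G ^ 2) := this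
        _ = β * (G ^ 2 * S) := by ring
    linarith [key n, hmle (φ n ω)]
  -- truncation sets
  set A : ℕ → Set Ω := fun R => {ω | L (φ 0 ω) ≤ (R : ℝ)} with hAdef
  have hLφ0 : Measurable[ℱ 0] fun ω => L (φ 0 ω) :=
    hLdiff.continuous.measurable.comp (hφmeas 0)
  have hAF : ∀ R, MeasurableSet[ℱ 0] (A R) := fun R => hLφ0 measurableSet_Iic
  have hA : ∀ R, MeasurableSet (A R) := fun R => (ℱ.le 0) _ (hAF R)
  have hμA1 : ∀ R, (μ (A R)).toReal ≤ 1 := by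
    intro R
    have h1 : μ (A R) ≤ μ Set.univ := measure_mono (Set.subset_univ _)
    have := ENNReal.toReal_mono (measure_ne_top μ _) h1
    simpa using this
  set b : ℕ → ℕ → ℝ := fun R t => ∫ ω in A R, ‖u t ω‖ ^ 2 ∂μ with hbdef
  have hb0 : ∀ R t, 0 ≤ b R t := fun R t =>
    setIntegral_nonneg (hA R) fun ω _ => by positivity
  -- partial sums of η t * b R t are bounded
  have hbsum : ∀ R, Summable fun t => η t * b R t := by
    intro R
    set C : ℝ := max ((R : ℝ) - m + β * (G ^ 2 * S)) 0 with hC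
    refine summable_of_sum_range_le (c := C)
      (fun t => mul_nonneg (hη0 t).le (hb0 R t)) (fun n => ?_)
    have h1 : ∀ t, η t * b R t = ∫ ω in A R, η t * ⟪u t ω, g t ω⟫ ∂μ := by
      intro t
      rw [integral_const_mul, hkey t (A R) (hAF R)]
    calc ∑ t ∈ Finset.range n, η t * b R t
        = ∫ ω in A R, ∑ t ∈ Finset.range n, η t * ⟪u t ω, g t ω⟫ ∂μ := by
          rw [integral_finset_sum _ (fun t _ => ((hinner_int t).const_mul (η t)).restrict)]
          exact Finset.sum_congr rfl fun t _ => h1 t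
      _ ≤ ∫ _ω in A R, ((R : ℝ) - m + β * (G ^ 2 * S)) ∂μ := by
          refine integral_mono_ae ?_ (integrable_const _) ?_
          · exact (integrable_finset_sum _
              (fun t _ => ((hinner_int t).const_mul (η t)))).restrict
          · rw [EventuallyLE, ae_restrict_iff' (hA R)]
            filter_upwards [hpath] with ω hω hωA
            have h2 : L (φ 0 ω) ≤ (R : ℝ) := hωA
            linarith [hω n]
      _ = (μ (A R)).toReal * ((R : ℝ) - m + β * (G ^ 2 * S)) := by
          rw [setIntegral_const, smul_eq_mul, measureReal_def]
      _ ≤ C := by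
          rcases le_or_gt 0 ((R : ℝ) - m + β * (G ^ 2 * S)) with h | h
          · refine le_trans ?_ (le_max_left _ _)
            nlinarith [hμA1 R, ENNReal.toReal_nonneg (a := μ (A R))]
          · refine le_trans ?_ (le_max_right _ _)
            nlinarith [ENNReal.toReal_nonneg (a := μ (A R))]
  -- increments of b are small
  set K : ℝ := 2 * β * Cgrad * G + 1 with hK
  have hKpos : 0 < K := by positivity
  have hbstep : ∀ R t, |b R (t + 1) - b R t| ≤ K * η t := by
    intro R t
    have haeb : ∀ᵐ ω ∂μ, |‖u (t + 1) ω‖ ^ 2 - ‖u t ω‖ ^ 2| ≤ 2 * β * Cgrad * G * η t := by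
      filter_upwards [hae] with ω hω
      obtain ⟨hgω, huω⟩ := hω
      have hd1 : ‖u (t + 1) ω - u t ω‖ ≤ β * (η t * ‖g t ω‖) := by
        have h2 : φ (t + 1) ω - φ t ω = -(η t • g t ω) := by rw [hrec t ω]; abel
        calc ‖u (t + 1) ω - u t ω‖ ≤ β * ‖φ (t + 1) ω - φ t ω‖ := hLip _ _
          _ = β * (η t * ‖g t ω‖) := by
              rw [h2, norm_neg, norm_smul, Real.norm_eq_abs, abs_of_pos (hη0 t)]
      have hfac : ‖u (t + 1) ω‖ ^ 2 - ‖u t ω‖ ^ 2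
          = (‖u (t + 1) ω‖ + ‖u t ω‖) * (‖u (t + 1) ω‖ - ‖u t ω‖) := by ring
      rw [hfac, abs_mul]
      have h3 : |‖u (t + 1) ω‖ - ‖u t ω‖| ≤ ‖u (t + 1) ω - u t ω‖ :=
        abs_norm_sub_norm_le _ _
      have h4 : |‖u (t + 1) ω‖ + ‖u t ω‖| ≤ 2 * Cgrad := by
        rw [abs_of_nonneg (by positivity)]
        linarith [huω (t + 1), huω t]
      have h5 : ‖g t ω‖ ≤ G := hgω t
      have h6 : ‖u (t + 1) ω - u t ω‖ ≤ β * (η t * G) := by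
        refine hd1.trans (mul_le_mul_of_nonneg_left ?_ hβ.le)
        exact mul_le_mul_of_nonneg_left h5 (hη0 t).le
      calc |‖u (t + 1) ω‖ + ‖u t ω‖| * |‖u (t + 1) ω‖ - ‖u t ω‖|
          ≤ (2 * Cgrad) * (β * (η t * G)) := by
            refine mul_le_mul h4 (h3.trans h6) (abs_nonneg _) (by positivity)
        _ = 2 * β * Cgrad * G * η t := by ring
    have hint : Integrable (fun ω => ‖u (t + 1) ω‖ ^ 2 - ‖u t ω‖ ^ 2) μ :=
      (husq_int (t + 1)).sub (husq_int t)
    have h7 : b R (t + 1) - b R t = ∫ ω in A R, (‖u (t + 1) ω‖ ^ 2 - ‖u t ω‖ ^ 2) ∂μ := by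
      rw [integral_sub ((husq_int (t + 1)).restrict) ((husq_int t).restrict)]
    rw [h7]
    have h8 : |∫ ω in A R, (‖u (t + 1) ω‖ ^ 2 - ‖u t ω‖ ^ 2) ∂μ|
        ≤ ∫ ω in A R, |‖u (t + 1) ω‖ ^ 2 - ‖u t ω‖ ^ 2| ∂μ := by
      calc |∫ ω in A R, (‖u (t + 1) ω‖ ^ 2 - ‖u t ω‖ ^ 2) ∂μ|
          = ‖∫ ω in A R, (‖u (t + 1) ω‖ ^ 2 - ‖u t ω‖ ^ 2) ∂μ‖ :=
            (Real.norm_eq_abs _).symm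
        _ ≤ ∫ ω in A R, ‖‖u (t + 1) ω‖ ^ 2 - ‖u t ω‖ ^ 2‖ ∂μ :=
            norm_integral_le_integral_norm _
        _ = ∫ ω in A R, |‖u (t + 1) ω‖ ^ 2 - ‖u t ω‖ ^ 2| ∂μ := by
            simp [Real.norm_eq_abs]
    refine h8.trans ?_
    calc ∫ ω in A R, |‖u (t + 1) ω‖ ^ 2 - ‖u t ω‖ ^ 2| ∂μ
        ≤ ∫ _ω in A R, 2 * β * Cgrad * G * η t ∂μ := by
          refine integral_mono_ae hint.abs.restrict (integrable_const _) ?_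
          exact ae_restrict_of_ae haeb
      _ = (μ (A R)).toReal * (2 * β * Cgrad * G * η t) := by
          rw [setIntegral_const, smul_eq_mul, measureReal_def]
      _ ≤ K * η t := by
          have h9 : 0 ≤ 2 * β * Cgrad * G * η t :=
            mul_nonneg (by positivity) (hη0 t).le
          have h10 := hμA1 R
          have h11 := ENNReal.toReal_nonneg (a := μ (A R))
          have h12 : (μ (A R)).toReal * (2 * β * Cgrad * G * η t)
              ≤ 2 * β * Cgrad * G * η t := by nlinarith
          refine h12.trans ?_
          have := (hη0 t).le
          rw [hK]; nlinarith
  -- each truncated expectation tends to zero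
  have hbtend : ∀ R, Tendsto (b R) atTop (nhds 0) := fun R =>
    det_tendsto_zero (b R) η (hb0 R) hη0 K hKpos (hbstep R) (hbsum R) hηdiv
  -- complement mass tends to zero
  have hcompl : Tendsto (fun R => (μ (A R)ᶜ).toReal) atTop (nhds 0) := by
    have h1 : Tendsto (fun R => μ (A R)ᶜ) atTop (nhds (μ (⋂ R, (A R)ᶜ))) := by
      refine tendsto_measure_iInter_atTop
        (fun R => ((hA R).compl).nullMeasurableSet) ?_ ⟨0, measure_ne_top μ _⟩
      intro R R' hRR' ω hω
      simp only [Set.mem_compl_iff, hAdef, Set.mem_setOf_eq] at hω ⊢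
      intro hle
      exact hω (hle.trans (by exact_mod_cast Nat.cast_le.mpr hRR'))
    have h2 : (⋂ R, (A R)ᶜ) = ∅ := by
      ext ω
      simp only [Set.mem_iInter, Set.mem_compl_iff, hAdef, Set.mem_setOf_eq,
        Set.mem_empty_iff_false, iff_false, not_forall, not_not]
      obtain ⟨R, hR⟩ := exists_nat_ge (L (φ 0 ω))
      exact ⟨R, hR⟩
    rw [h2, measure_empty] at h1
    have h3 := (ENNReal.tendsto_toReal ENNReal.zero_ne_top).comp h1
    simpa [Function.comp_def] using h3
  -- bound on total expectation
  have hsplit : ∀ R t, (∫ ω, ‖u t ω‖ ^ 2 ∂μ) ≤ b R t + Cgrad ^ 2 * (μ (A R)ᶜ).toReal := by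
    intro R t
    have h1 : (∫ ω, ‖u t ω‖ ^ 2 ∂μ)
        = b R t + ∫ ω in (A R)ᶜ, ‖u t ω‖ ^ 2 ∂μ :=
      (integral_add_compl (hA R) (husq_int t)).symm
    rw [h1]
    have h2 : ∫ ω in (A R)ᶜ, ‖u t ω‖ ^ 2 ∂μ ≤ ∫ _ω in (A R)ᶜ, Cgrad ^ 2 ∂μ := by
      refine integral_mono_ae (husq_int t).restrict (integrable_const _) ?_
      refine ae_restrict_of_ae ?_
      filter_upwards [hgradbd t] with ω hω
      exact pow_le_pow_left₀ (norm_nonneg _) hω 2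
    have h3 : ∫ _ω in (A R)ᶜ, Cgrad ^ 2 ∂μ = (μ (A R)ᶜ).toReal * Cgrad ^ 2 := by
      rw [setIntegral_const, smul_eq_mul, measureReal_def]
    nlinarith [h2, h3]
  -- conclusion
  have hanonneg : ∀ t, 0 ≤ ∫ ω, ‖u t ω‖ ^ 2 ∂μ := fun t =>
    integral_nonneg fun ω => by positivity
  have hfinal : Tendsto (fun t => ∫ ω, ‖u t ω‖ ^ 2 ∂μ) atTop (nhds 0) := by
    rw [Metric.tendsto_atTop]
    intro ε hε
    have h1 : ∀ᶠ R in atTop, Cgrad ^ 2 * (μ (A R)ᶜ).toReal < ε / 2 := by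
      have h2 : Tendsto (fun R => Cgrad ^ 2 * (μ (A R)ᶜ).toReal) atTop (nhds 0) := by
        simpa using hcompl.const_mul (Cgrad ^ 2)
      have := h2.eventually (eventually_lt_nhds (by linarith : (0:ℝ) < ε / 2))
      simpa using this
    obtain ⟨R, hR⟩ := h1.exists
    have h3 := (Metric.tendsto_atTop.mp (hbtend R)) (ε / 2) (by linarith)
    obtain ⟨N, hN⟩ := h3
    refine ⟨N, fun t ht => ?_⟩
    have h4 := hN t ht
    rw [Real.dist_eq, sub_zero, abs_of_nonneg (hb0 R t)] at h4
    rw [Real.dist_eq, sub_zero, abs_of_nonneg (hanonneg t)]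
    calc (∫ ω, ‖u t ω‖ ^ 2 ∂μ) ≤ b R t + Cgrad ^ 2 * (μ (A R)ᶜ).toReal := hsplit R t
      _ < ε / 2 + ε / 2 := by linarith
      _ = ε := by ring
  exact hfinal
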